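/- Let p ≥ 2, q = p/(p-1), δ = q(q-1)/8, and define B(u,v) = u^p + v^q + δ·((2/p)u^p + (2/q − 1)v^q) if u^p ≥ v^q, and B(u,v) = u^p + v^q + δ·u²v^{2-q} if u^p ≤ v^q, for u,v ≥ 0. Then B(u,v) ≤ (1 + 2/p)·u^p + (2/q)·v^q for all u,v ≥ 0. -/

import Mathlib

noncomputable def Bell (p q δ u v : ℝ) : ℝ :=
  if v ^ q ≤ u ^ p then
    u ^ p + v ^ q + δ * ((2 / p) * u ^ p + (2 / q - 1) * v ^ q)
  else
    u ^ p + v ^ q + δ * (u ^ (2 : ℝ) * v ^ (2 - q))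

lemma bell_aux (p q u v : ℝ) (hp : 2 ≤ p) (hq : q = p / (p - 1)) (hu : 0 ≤ u) (hv : 0 < v) :
    u ^ (2 : ℝ) * v ^ (2 - q) ≤ (2 / p) * u ^ p + (1 - 2 / p) * v ^ q := by
  have hp0 : (0:ℝ) < p := by linarith
  rcases eq_or_lt_of_le hp with h2 | h2
  · have hq2 : q = 2 := by rw [hq, ← h2]; norm_num
    rw [hq2, ← h2, show (2:ℝ) - 2 = 0 by ring, Real.rpow_zero]
    norm_num
  · -- 2 < p
    have hconj : (p / 2).HolderConjugate (p / (p - 2)) := by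
      refine (Real.holderConjugate_iff_eq_conjExponent ?_).2 ?_
      · rw [lt_div_iff₀ (by norm_num)]; linarith
      · have h1 : p - 2 ≠ 0 := by linarith
        field_simp
    have hyoung := Real.young_inequality_of_nonneg
      (Real.rpow_nonneg hu 2) (Real.rpow_nonneg hv.le (2 - q)) hconj
    have e1 : (u ^ (2:ℝ)) ^ (p / 2) = u ^ p := by
      rw [← Real.rpow_mul hu]; congr 1; field_simp
    have e2 : (v ^ ((2:ℝ) - q)) ^ (p / (p - 2)) = v ^ q := by
      rw [← Real.rpow_mul hv.le]; congr 1
      have h1 : p - 1 ≠ 0 := by linarith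
      have h3 : p - 2 ≠ 0 := by linarith
      rw [hq]; field_simp; ring
    rw [e1, e2] at hyoung
    have hd1 : u ^ p / (p / 2) = (2 / p) * u ^ p := by field_simp
    have hd2 : v ^ q / (p / (p - 2)) = (1 - 2 / p) * v ^ q := by field_simp
    rw [hd1, hd2] at hyoung
    exact hyoung

theorem bellman_upper_bound (p q δ u v : ℝ) (hp : 2 ≤ p) (hq : q = p / (p - 1))
    (hδ : δ = q * (q - 1) / 8) (hu : 0 ≤ u) (hv : 0 ≤ v) :
    Bell p q δ u v ≤ (1 + 2 / p) * u ^ p + (2 / q) * v ^ q := by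
  have hp0 : (0:ℝ) < p := by linarith
  have hp1 : (0:ℝ) < p - 1 := by linarith
  have hq1 : 1 < q := by
    rw [hq, lt_div_iff₀ hp1]; linarith
  have hq2 : q ≤ 2 := by
    rw [hq, div_le_iff₀ hp1]; linarith
  have hδ0 : 0 ≤ δ := by rw [hδ]; nlinarith
  have hδ1 : δ ≤ 1 := by rw [hδ]; nlinarith
  have hup : 0 ≤ u ^ p := Real.rpow_nonneg hu p
  have hvq : 0 ≤ v ^ q := Real.rpow_nonneg hv q
  have h2q : 2 / q - 1 = 1 - 2 / p := by
    rw [hq]; field_simp; ring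
  have h2q' : 0 ≤ 2 / q - 1 := by
    rw [h2q]
    have : 2 / p ≤ 1 := by rw [div_le_one hp0]; linarith
    linarith
  unfold Bell
  split_ifs with h
  · have hX : 0 ≤ (2 / p) * u ^ p + (2 / q - 1) * v ^ q := by positivity
    nlinarith [mul_le_of_le_one_left hX hδ1]
  · have hv0 : 0 < v := by
      rcases eq_or_lt_of_le hv with rfl | h'
      · exfalso; apply h
        rw [Real.zero_rpow (by linarith : q ≠ 0)]
        exact hup
      · exact h'
    have key := bell_aux p q u v hp hq hu hv0
    have huv : 0 ≤ u ^ (2:ℝ) * v ^ (2 - q) := by positivity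
    have hX : 0 ≤ 2 / p * u ^ p + (1 - 2 / p) * v ^ q := by
      have : 0 ≤ 1 - 2 / p := by linarith [h2q', h2q]
      positivity
    have e : (2 / q) * v ^ q = (2 - 2 / p) * v ^ q := by
      have : 2 / q = 2 - 2 / p := by linarith [h2q]
      rw [this]
    rw [e]
    nlinarith [mul_le_mul_of_nonneg_left key hδ0, mul_le_of_le_one_left hX hδ1]
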